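/- arXiv:0906.3491 — 3 statements merged into one kernel-verified Lean document; each statement's English description precedes it below -/
import Mathlib

section
/- If ρ : F_n → PSL(2,C) is primitive-stable, then there exists r > 0 such that for every primitive element w of F_n, the translation length ℓ_ρ(w) of ρ(w) on H^3 satisfies ℓ_ρ(w) ≥ r·||w||, where ||w|| is the cyclically reduced word length of w. In particular, ρ(w) is loxodromic for every primitive w. -/
/-- Word length of an element of the free group: the length of its reduced word. -/
def wl {n : ℕ} (g : FreeGroup (Fin n)) : ℕ := (FreeGroup.toWord g).length

/-- Cyclically reduced word length `‖g‖`: the minimal word length in the conjugacy class. -/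
noncomputable def cwl {n : ℕ} (g : FreeGroup (Fin n)) : ℕ :=
  sInf (Set.range fun x : FreeGroup (Fin n) => wl (x * g * x⁻¹))

/-- An element of the free group is primitive if it is the image of a standard generator
under an automorphism, equivalently if it belongs to some free basis. -/
def IsPrimitive {n : ℕ} (g : FreeGroup (Fin n)) : Prop :=
  ∃ (φ : FreeGroup (Fin n) ≃* FreeGroup (Fin n)) (i : Fin n), φ (FreeGroup.of i) = g

/-- The formal inverse of a letter of the free group. -/
def invL {n : ℕ} (a : Fin n × Bool) : Fin n × Bool := (a.1, !a.2)

/-- A word is cyclically reduced if its first letter is not the inverse of its last letter. -/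
def IsCyclicallyReduced {n : ℕ} (g : FreeGroup (Fin n)) : Prop :=
  ∀ h : g.toWord ≠ [], g.toWord.head h ≠ invL (g.toWord.getLast h)

/-- The vertices of the Cayley tree lying on the axis (periodic bi-infinite leaf `w̄`) of a
cyclically reduced word `w`: the points `w^q · (prefix of w)`. -/
def axisVertices {n : ℕ} (w : FreeGroup (Fin n)) : Set (FreeGroup (Fin n)) :=
  {v | ∃ (q : ℤ) (s : ℕ), v = w ^ q * FreeGroup.mk (w.toWord.take s)}

/-- Translation length of an isometry: `inf_p d(p, φ p)`. -/
noncomputable def transLength {H : Type*} [MetricSpace H] (φ : H ≃ᵢ H) : ℝ :=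
  ⨅ p : H, dist p (φ p)

/-- The orbit map `τ_{ρ,x}` (sending a vertex `v` of the Cayley tree to `ρ(v)·x`) is a
`(K,δ)`-quasigeodesic along the leaf of `w`: image distances and tree distances
(`d_T(u,v) = wl (u⁻¹ v)`) agree up to multiplicative constant `K` and additive constant `δ`. -/
def AxisQuasiGeodesic {n : ℕ} {H : Type*} [MetricSpace H]
    (ρ : FreeGroup (Fin n) →* (H ≃ᵢ H)) (x : H) (K δ : ℝ) (w : FreeGroup (Fin n)) : Prop :=
  ∀ u ∈ axisVertices w, ∀ v ∈ axisVertices w,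
    K⁻¹ * (wl (u⁻¹ * v) : ℝ) - δ ≤ dist ((ρ u) x) ((ρ v) x) ∧
      dist ((ρ u) x) ((ρ v) x) ≤ K * (wl (u⁻¹ * v) : ℝ) + δ

/-- A representation `ρ : Fₙ → Isom(ℍ³)` is primitive-stable if for some constants `K, δ`
and basepoint `x`, the orbit map takes all primitive leaves to `(K,δ)`-quasigeodesics. -/
def PrimitiveStable {n : ℕ} {H : Type*} [MetricSpace H]
    (ρ : FreeGroup (Fin n) →* (H ≃ᵢ H)) : Prop :=
  ∃ (K δ : ℝ) (x : H), 1 ≤ K ∧ 0 ≤ δ ∧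
    ∀ w, IsPrimitive w → IsCyclicallyReduced w → AxisQuasiGeodesic ρ x K δ w

namespace PSAux

variable {n : ℕ}

/-- The "no cancellation" relation on letters. -/
def Rel : (Fin n × Bool) → (Fin n × Bool) → Prop :=
  fun a b => ¬(a.1 = b.1 ∧ a.2 = !b.2)

lemma reduce_eq_self_of_chain : ∀ {l : List (Fin n × Bool)},
    List.Chain' Rel l → FreeGroup.reduce l = l
  | [], _ => rfl
  | x :: xs, h => by
    obtain ⟨hx, hxs⟩ := List.isChain_cons.1 h
    rw [FreeGroup.reduce.cons, reduce_eq_self_of_chain hxs]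
    cases xs with
    | nil => rfl
    | cons y ys =>
      have hr : ¬(x.1 = y.1 ∧ x.2 = !y.2) := hx y rfl
      simp only [List.casesOn]
      rw [if_neg hr]

lemma chain_of_reduce : ∀ {l : List (Fin n × Bool)},
    FreeGroup.reduce l = l → List.Chain' Rel l
  | [], _ => List.isChain_nil
  | x :: xs, h => by
    rw [FreeGroup.reduce.cons] at h
    have hlen : (FreeGroup.reduce xs).length ≤ xs.length :=
      FreeGroup.Red.length_le FreeGroup.reduce.red
    cases hr : FreeGroup.reduce xs with
    | nil =>
      rw [hr] at h
      simp only [List.casesOn] at h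
      have hx : xs = [] := by
        injection h with _ h2
        exact h2.symm
      subst hx
      exact List.isChain_singleton x
    | cons y ys =>
      rw [hr] at h
      simp only [List.casesOn] at h
      by_cases hc : x.1 = y.1 ∧ x.2 = !y.2
      · rw [if_pos hc] at h
        exfalso
        have h1 := congrArg List.length h
        rw [hr] at hlen
        simp at h1 hlen
        omega
      · rw [if_neg hc] at h
        have h2 : y :: ys = xs := by
          injection h with _ h2
        have hxs : FreeGroup.reduce xs = xs := hr.trans h2
        refine List.isChain_cons.2 ⟨?_, chain_of_reduce hxs⟩
        intro z hz
        rw [← h2] at hz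
        simp at hz
        subst hz
        exact hc

lemma chain'_replicate {l : List (Fin n × Bool)}
    (hS : ∀ a ∈ l.getLast?, ∀ b ∈ l.head?, Rel a b) :
    ∀ k, List.Chain' (fun l₁ l₂ : List (Fin n × Bool) =>
      ∀ a ∈ l₁.getLast?, ∀ b ∈ l₂.head?, Rel a b) (List.replicate k l)
  | 0 => List.isChain_nil
  | (k+1) => by
    rw [List.replicate_succ]
    refine List.isChain_cons.2 ⟨?_, chain'_replicate hS k⟩
    intro y hy
    cases k with
    | zero => simp at hy
    | succ k =>
      rw [List.replicate_succ] at hy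
      simp at hy
      subst hy
      exact hS

/-- Power of a cyclically reduced element: the reduced word is the concatenation. -/
lemma toWord_pow {w : FreeGroup (Fin n)} (hcr : IsCyclicallyReduced w) (k : ℕ) :
    (w ^ k).toWord = (List.replicate k w.toWord).flatten := by
  by_cases hnil : w.toWord = []
  · have hw1 : w = 1 := FreeGroup.toWord_eq_nil_iff.1 hnil
    subst hw1
    rw [one_pow, hnil]
    symm
    rw [List.flatten_eq_nil_iff]
    intro x hx
    exact List.eq_of_mem_replicate hx
  · have hchain : List.Chain' Rel w.toWord :=
      chain_of_reduce (FreeGroup.reduce_toWord w)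
    have hlasthead : ∀ a ∈ w.toWord.getLast?, ∀ b ∈ w.toWord.head?, Rel a b := by
      intro a ha b hb
      rw [List.getLast?_eq_getLast hnil] at ha
      rw [List.head?_eq_head hnil] at hb
      simp only [Option.mem_def, Option.some.injEq] at ha hb
      rintro ⟨h1, h2⟩
      apply hcr hnil
      have hb2 : b.2 = !a.2 := by rw [h2, Bool.not_not]
      have : b = invL a := by
        have : invL a = (a.1, !a.2) := rfl
        rw [this]
        exact Prod.ext h1.symm hb2
      rw [hb, ha]
      exact this
    have hmem : [] ∉ List.replicate k w.toWord := by
      intro hmem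
      exact hnil (List.eq_of_mem_replicate hmem).symm
    have hflat : List.Chain' Rel (List.replicate k w.toWord).flatten := by
      refine (List.isChain_flatten hmem).2 ?_
      constructor
      · intro l hl
        rw [List.eq_of_mem_replicate hl]
        exact hchain
      · exact chain'_replicate hlasthead k
    conv_lhs => rw [← FreeGroup.mk_toWord (x := w)]
    rw [FreeGroup.pow_mk, FreeGroup.toWord_mk]
    exact reduce_eq_self_of_chain hflat

lemma wl_pow {w : FreeGroup (Fin n)} (hcr : IsCyclicallyReduced w) (k : ℕ) :
    wl (w ^ k) = k * wl w := by
  unfold wl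
  rw [toWord_pow hcr k]
  simp [List.length_flatten, List.map_replicate, List.sum_replicate, smul_eq_mul]

/-- Every element is conjugate to a cyclically reduced element. -/
lemma exists_conj_cyclred (g : FreeGroup (Fin n)) :
    ∃ c : FreeGroup (Fin n), IsCyclicallyReduced (c * g * c⁻¹) := by
  suffices h : ∀ N (g : FreeGroup (Fin n)), wl g ≤ N →
      ∃ c : FreeGroup (Fin n), IsCyclicallyReduced (c * g * c⁻¹) from h (wl g) g le_rfl
  intro N
  induction N with
  | zero =>
    intro g hg
    refine ⟨1, ?_⟩
    have : g.toWord = [] := List.length_eq_zero_iff.1 (Nat.le_zero.1 hg)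
    intro hne
    exfalso
    apply hne
    simp [this]
  | succ N ih =>
    intro g hg
    by_cases hcr : IsCyclicallyReduced g
    · exact ⟨1, by simpa using hcr⟩
    · unfold IsCyclicallyReduced at hcr
      push_neg at hcr
      obtain ⟨hne, heq⟩ := hcr
      -- length at least 2
      have hlen2 : 2 ≤ g.toWord.length := by
        by_contra hl
        push_neg at hl
        have h0 : g.toWord.length ≠ 0 := fun h0 => hne (List.length_eq_zero_iff.1 h0)
        have h1 : g.toWord.length = 1 := by omega
        obtain ⟨y, hy⟩ := List.length_eq_one_iff.1 h1
        have hhd : g.toWord.head hne = y := by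
          have q1 : g.toWord.head? = some (g.toWord.head hne) := List.head?_eq_head hne
          have q2 : g.toWord.head? = some y := by rw [hy]; rfl
          rw [q2] at q1
          exact (Option.some.inj q1).symm
        have hgl : g.toWord.getLast hne = y := by
          have q1 : g.toWord.getLast? = some (g.toWord.getLast hne) :=
            List.getLast?_eq_getLast hne
          have q2 : g.toWord.getLast? = some y := by rw [hy]; rfl
          rw [q2] at q1
          exact (Option.some.inj q1).symm
        rw [hhd, hgl] at heq
        have := congrArg Prod.snd heq
        simp [invL] at this
      have htne : g.toWord.tail ≠ [] := by
        intro h0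
        have := congrArg List.length h0
        simp [List.length_tail] at this
        omega
      -- decompose the word as  invL b :: t ++ [b]
      obtain ⟨t, b, hLdecomp⟩ :
          ∃ (t : List (Fin n × Bool)) (b : Fin n × Bool),
            g.toWord = invL b :: (t ++ [b]) := by
        refine ⟨g.toWord.tail.dropLast, g.toWord.tail.getLast htne, ?_⟩
        have h1 : g.toWord = g.toWord.head hne :: g.toWord.tail :=
          (List.cons_head_tail hne).symm
        have h2 : g.toWord.tail =
            g.toWord.tail.dropLast ++ [g.toWord.tail.getLast htne] :=
          (List.dropLast_append_getLast htne).symm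
        have h3 : g.toWord.getLast hne = g.toWord.tail.getLast htne := by
          have q1 : g.toWord.getLast? = some (g.toWord.getLast hne) :=
            List.getLast?_eq_getLast hne
          have q2 : g.toWord.getLast? = some (g.toWord.tail.getLast htne) := by
            conv_lhs => rw [h1, h2]
            rw [← List.cons_append, List.getLast?_concat]
          rw [q1] at q2
          exact Option.some.inj q2
        conv_lhs => rw [h1, h2]
        rw [heq, h3]
      -- conjugating by mk [b] shortens the word
      have hinv : (FreeGroup.mk [b])⁻¹ = FreeGroup.mk [invL b] := by
        rw [FreeGroup.inv_mk]
        rfl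
      have hgdecomp : g = FreeGroup.mk [invL b] * FreeGroup.mk t * FreeGroup.mk [b] := by
        conv_lhs => rw [← FreeGroup.mk_toWord (x := g), hLdecomp]
        rw [FreeGroup.mul_mk, FreeGroup.mul_mk]
        rfl
      have hconj : FreeGroup.mk [b] * g * (FreeGroup.mk [b])⁻¹ = FreeGroup.mk t := by
        rw [hgdecomp, hinv]
        calc FreeGroup.mk [b] * (FreeGroup.mk [invL b] * FreeGroup.mk t * FreeGroup.mk [b]) *
              FreeGroup.mk [invL b]
            = (FreeGroup.mk [b] * (FreeGroup.mk [b])⁻¹) * FreeGroup.mk t *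
              (FreeGroup.mk [b] * (FreeGroup.mk [b])⁻¹) := by rw [hinv]; group
          _ = FreeGroup.mk t := by group
      have hwl : wl (FreeGroup.mk t) ≤ N := by
        unfold wl
        rw [FreeGroup.toWord_mk]
        have h1 : (FreeGroup.reduce t).length ≤ t.length :=
          FreeGroup.Red.length_le FreeGroup.reduce.red
        have h2 : g.toWord.length = t.length + 2 := by
          rw [hLdecomp]
          simp
        have h3 : g.toWord.length ≤ N + 1 := hg
        omega
      obtain ⟨d, hd⟩ := ih (FreeGroup.mk t) hwl
      refine ⟨d * FreeGroup.mk [b], ?_⟩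
      have hre : d * FreeGroup.mk [b] * g * (d * FreeGroup.mk [b])⁻¹ =
          d * (FreeGroup.mk [b] * g * (FreeGroup.mk [b])⁻¹) * d⁻¹ := by group
      rw [hre, hconj]
      exact hd

end PSAux

section MainAux

variable {H : Type*} [MetricSpace H] [Nonempty H]

lemma bddBelow_distFun (χ : H ≃ᵢ H) : BddBelow (Set.range fun p => dist p (χ p)) := by
  refine ⟨0, ?_⟩
  rintro y ⟨p, rfl⟩
  exact dist_nonneg

lemma transLength_conj (ψ φ : H ≃ᵢ H) : transLength (ψ * φ * ψ⁻¹) = transLength φ := by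
  have key : ∀ p, dist p ((ψ * φ * ψ⁻¹) p) = dist (ψ⁻¹ p) (φ (ψ⁻¹ p)) := by
    intro p
    calc dist p ((ψ * φ * ψ⁻¹) p)
        = dist (ψ (ψ⁻¹ p)) (ψ (φ (ψ⁻¹ p))) := by
          rw [ψ.apply_inv_self]
          rfl
      _ = dist (ψ⁻¹ p) (φ (ψ⁻¹ p)) := ψ.dist_eq _ _
  unfold transLength
  apply le_antisymm
  · refine le_ciInf fun p => ?_
    have h := ciInf_le (bddBelow_distFun (ψ * φ * ψ⁻¹)) (ψ p)
    rw [key] at h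
    simpa using h
  · refine le_ciInf fun p => ?_
    rw [key]
    exact ciInf_le (bddBelow_distFun φ) _

lemma dist_pow_le (φ : H ≃ᵢ H) (p : H) : ∀ k : ℕ, dist p ((φ ^ k) p) ≤ k * dist p (φ p)
  | 0 => by simp
  | (k+1) => by
    have h1 : (φ ^ (k+1)) p = φ ((φ ^ k) p) := by
      rw [pow_succ']
      rfl
    rw [h1]
    calc dist p (φ ((φ ^ k) p)) ≤ dist p (φ p) + dist (φ p) (φ ((φ ^ k) p)) := dist_triangle _ _ _
      _ = dist p (φ p) + dist p ((φ ^ k) p) := by rw [φ.dist_eq]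
      _ ≤ dist p (φ p) + k * dist p (φ p) := by
          have := dist_pow_le φ p k
          linarith
      _ = (k + 1 : ℕ) * dist p (φ p) := by push_cast; ring

end MainAux

/-- If `ρ` is primitive-stable then there is `r > 0` with `ℓ_ρ(w) ≥ r·‖w‖` for every
primitive `w`; in particular `ρ(w)` is loxodromic (positive translation length) for every
primitive `w`. -/
theorem primitiveStable_translation_lower_bound {n : ℕ} (hn : 2 ≤ n)
    {H : Type*} [MetricSpace H] [Nonempty H]
    (ρ : FreeGroup (Fin n) →* (H ≃ᵢ H)) (h : PrimitiveStable ρ) :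
    ∃ r : ℝ, 0 < r ∧ ∀ w : FreeGroup (Fin n), IsPrimitive w →
      r * (cwl w : ℝ) ≤ transLength (ρ w) ∧ 0 < transLength (ρ w) := by
  obtain ⟨K, δ, x, hK, hδ, hPS⟩ := h
  have hK0 : (0:ℝ) < K := lt_of_lt_of_le one_pos hK
  have hr : (0:ℝ) < K⁻¹ := inv_pos.2 hK0
  refine ⟨K⁻¹, hr, ?_⟩
  intro w hw
  obtain ⟨c, hcr⟩ := PSAux.exists_conj_cyclred w
  set w' := c * w * c⁻¹ with hw'def
  have hw' : IsPrimitive w' := by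
    obtain ⟨φ, i, hi⟩ := hw
    exact ⟨φ.trans (MulAut.conj c), i, by simp [MulEquiv.trans_apply, MulAut.conj_apply, hi, hw'def]⟩
  -- w is nontrivial
  have hwne : w ≠ 1 := by
    obtain ⟨φ, i, hi⟩ := hw
    intro h1
    rw [h1] at hi
    have : FreeGroup.of i = (1 : FreeGroup (Fin n)) := by
      have := congrArg φ.symm hi
      simpa using this
    have h2 := congrArg FreeGroup.toWord this
    simp [FreeGroup.toWord_of, FreeGroup.toWord_one] at h2
  -- all conjugates nontrivial, so cwl ≥ 1
  have hcwl1 : 1 ≤ cwl w := by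
    unfold cwl
    have hne : (Set.range fun x : FreeGroup (Fin n) => wl (x * w * x⁻¹)).Nonempty :=
      ⟨_, ⟨1, rfl⟩⟩
    obtain ⟨d, hd⟩ := Nat.sInf_mem hne
    rw [← hd]
    by_contra hlt
    push_neg at hlt
    have h0 : wl (d * w * d⁻¹) = 0 := Nat.lt_one_iff.1 hlt
    have : d * w * d⁻¹ = 1 := FreeGroup.toWord_eq_nil_iff.1 (List.length_eq_zero_iff.1 h0)
    apply hwne
    have := congrArg (fun z => d⁻¹ * z * d) this
    simpa [mul_assoc] using this
  have hw'ne : w' ≠ 1 := by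
    rw [hw'def]
    intro h1
    apply hwne
    have := congrArg (fun z => c⁻¹ * z * c) h1
    simpa [mul_assoc] using this
  have hQG := hPS w' hw' hcr
  set m : ℕ := wl w' with hm
  -- the key pointwise lower bound
  have hpoint : ∀ p : H, K⁻¹ * (m : ℝ) ≤ dist p (ρ w' p) := by
    intro p
    by_contra hlt
    push_neg at hlt
    set D := dist p (ρ w' p) with hD
    set E := K⁻¹ * (m : ℝ) - D with hE
    have hEpos : 0 < E := by rw [hE]; linarith
    obtain ⟨k, hk⟩ := exists_nat_gt ((δ + 2 * dist x p) / E)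
    -- lower bound from quasigeodesic
    have h1mem : (1 : FreeGroup (Fin n)) ∈ axisVertices w' := by
      refine ⟨0, 0, ?_⟩
      simp [FreeGroup.one_eq_mk]
    have hkmem : w' ^ k ∈ axisVertices w' := by
      refine ⟨(k : ℤ), 0, ?_⟩
      simp [zpow_natCast, FreeGroup.one_eq_mk]
    have hlow := (hQG 1 h1mem (w' ^ k) hkmem).1
    rw [inv_one, one_mul] at hlow
    rw [PSAux.wl_pow hcr k] at hlow
    rw [map_one] at hlow
    have hρ1 : ((1 : H ≃ᵢ H)) x = x := rfl
    rw [hρ1] at hlow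
    -- upper bound by triangle inequality
    have hup : dist x ((ρ (w' ^ k)) x) ≤ 2 * dist x p + (k : ℝ) * D := by
      rw [map_pow]
      calc dist x (((ρ w') ^ k) x)
          ≤ dist x p + dist p (((ρ w') ^ k) p) + dist (((ρ w') ^ k) p) (((ρ w') ^ k) x) :=
            dist_triangle4 _ _ _ _
        _ = dist x p + dist p (((ρ w') ^ k) p) + dist p x := by
            rw [((ρ w') ^ k).dist_eq]
        _ ≤ dist x p + (k : ℝ) * D + dist p x := by
            have := dist_pow_le (ρ w') p k
            rw [← hD] at this
            linarith
        _ = 2 * dist x p + (k : ℝ) * D := by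
            rw [dist_comm p x]; ring
    have hcast : ((k * m : ℕ) : ℝ) = (k : ℝ) * (m : ℝ) := by push_cast; ring
    rw [hcast] at hlow
    have hmain : (k : ℝ) * E ≤ δ + 2 * dist x p := by
      have := hlow.trans hup
      rw [hE]
      nlinarith
    have hk' : δ + 2 * dist x p < (k : ℝ) * E := by
      rw [div_lt_iff₀ hEpos] at hk
      linarith
    linarith
  have htl : K⁻¹ * (m : ℝ) ≤ transLength (ρ w') := le_ciInf hpoint
  have hconj : transLength (ρ w') = transLength (ρ w) := by
    rw [hw'def, map_mul, map_mul, map_inv]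
    exact transLength_conj (ρ c) (ρ w)
  have hcwlle : cwl w ≤ m := Nat.sInf_le ⟨c, rfl⟩
  have hmono : K⁻¹ * (cwl w : ℝ) ≤ K⁻¹ * (m : ℝ) := by
    apply mul_le_mul_of_nonneg_left _ (le_of_lt hr)
    exact_mod_cast hcwlle
  constructor
  · calc K⁻¹ * (cwl w : ℝ) ≤ K⁻¹ * (m : ℝ) := hmono
      _ ≤ transLength (ρ w') := htl
      _ = transLength (ρ w) := hconj
  · have hpos : (0:ℝ) < K⁻¹ * (cwl w : ℝ) := by
      apply mul_pos hr
      exact_mod_cast Nat.lt_of_lt_of_le Nat.zero_lt_one hcwl1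
    calc (0:ℝ) < K⁻¹ * (cwl w : ℝ) := hpos
      _ ≤ K⁻¹ * (m : ℝ) := hmono
      _ ≤ transLength (ρ w') := htl
      _ = transLength (ρ w) := hconj
end

section
/- Suppose ρ' : F_n → PSL(2,C), F_n = A * B with B nontrivial generated in part by a basis element b, and there is a sequence g_m ∈ A of reduced words with word length tending to infinity such that ρ'(g_m) → id. Then ρ' is not primitive-stable. -/
open Filter

section Aux
open FreeGroup

lemma reduce_cons_eq {α : Type*} [DecidableEq α] {x : α × Bool} {L : List (α × Bool)}
    (h : reduce (x :: L) = x :: L) : reduce L = L := by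
  have hle : (reduce L).length ≤ L.length := (reduce.red.sublist).length_le
  rw [reduce.cons] at h
  cases r : reduce L with
  | nil =>
    rw [r] at h
    simp only at h
    have hL : L = [] := by injection h with h1 h2; exact h2.symm
    subst hL; exact r
  | cons hd tl =>
    rw [r] at h
    simp only at h
    split_ifs at h with hc
    · have := congrArg List.length h
      rw [r] at hle
      simp at this hle
      omega
    · have hL : L = hd :: tl := by injection h with h1 h2; exact h2.symm
      rw [hL, ← r, hL]

lemma reduce_concat {α : Type*} [DecidableEq α] (L : List (α × Bool)) (a : α × Bool)
    (hred : reduce L = L) (hne : ∀ x ∈ L, x.1 ≠ a.1) : reduce (L ++ [a]) = L ++ [a] := by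
  induction L with
  | nil => simp [reduce]
  | cons x L ih =>
    have hL : reduce L = L := reduce_cons_eq hred
    have hih : reduce (L ++ [a]) = L ++ [a] :=
      ih hL (fun y hy => hne y (List.mem_cons_of_mem _ hy))
    rw [List.cons_append, reduce.cons, hih]
    cases L with
    | nil =>
      simp only [List.nil_append]
      have : ¬ (x.1 = a.1 ∧ x.2 = !a.2) := fun ⟨h1, _⟩ => hne x (List.mem_cons_self) h1
      rw [if_neg this]
    | cons y L' =>
      simp only [List.cons_append]
      have : ¬ (x.1 = y.1 ∧ x.2 = !y.2) := by
        intro hc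
        rw [reduce.cons, hL] at hred
        simp only at hred
        rw [if_pos hc] at hred
        have := congrArg List.length hred
        simp at this
        omega
      rw [if_neg this]

lemma letters_mem_of_mem_closure {n : ℕ} {S : Set (Fin n)} {g : FreeGroup (Fin n)}
    (hg : g ∈ Subgroup.closure (FreeGroup.of '' S)) :
    ∀ x ∈ g.toWord, x.1 ∈ S := by
  induction hg using Subgroup.closure_induction with
  | mem x hx =>
    obtain ⟨s, hs, rfl⟩ := hx
    intro y hy
    rw [toWord_of] at hy
    simp at hy
    subst hy; exact hs
  | one => intro y hy; rw [toWord_one] at hy; simp at hy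
  | mul x y _ _ hx hy =>
    intro z hz
    have := (toWord_mul_sublist x y).subset hz
    rcases List.mem_append.mp this with h | h
    · exact hx z h
    · exact hy z h
  | inv x _ hx =>
    intro z hz
    rw [toWord_inv] at hz
    simp only [invRev, List.mem_reverse, List.mem_map] at hz
    obtain ⟨w, hw, rfl⟩ := hz
    exact hx w hw

lemma hom_fix_of_mem_closure {n : ℕ} {S : Set (Fin n)} {g : FreeGroup (Fin n)}
    (hg : g ∈ Subgroup.closure (FreeGroup.of '' S))
    (f : FreeGroup (Fin n) →* FreeGroup (Fin n))
    (hf : ∀ s ∈ S, f (FreeGroup.of s) = FreeGroup.of s) : f g = g := by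
  induction hg using Subgroup.closure_induction with
  | mem x hx => obtain ⟨s, hs, rfl⟩ := hx; exact hf s hs
  | one => exact _root_.map_one f
  | mul x y _ _ hx hy => rw [_root_.map_mul, hx, hy]
  | inv x _ hx => rw [_root_.map_inv, hx]

lemma isPrimitive_mul_of {n : ℕ} {S : Set (Fin n)} {j : Fin n} (hj : j ∉ S)
    {g : FreeGroup (Fin n)} (hg : g ∈ Subgroup.closure (FreeGroup.of '' S)) :
    ∃ (φ : FreeGroup (Fin n) ≃* FreeGroup (Fin n)), φ (FreeGroup.of j) = g * FreeGroup.of j := by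
  classical
  set α : FreeGroup (Fin n) →* FreeGroup (Fin n) :=
    FreeGroup.lift (fun i => if i = j then g * FreeGroup.of j else FreeGroup.of i) with hα
  set β : FreeGroup (Fin n) →* FreeGroup (Fin n) :=
    FreeGroup.lift (fun i => if i = j then g⁻¹ * FreeGroup.of j else FreeGroup.of i) with hβ
  have hαS : ∀ s ∈ S, α (FreeGroup.of s) = FreeGroup.of s := by
    intro s hs
    rw [hα, FreeGroup.lift_apply_of, if_neg (fun h : s = j => hj (h ▸ hs))]
  have hβS : ∀ s ∈ S, β (FreeGroup.of s) = FreeGroup.of s := by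
    intro s hs
    rw [hβ, FreeGroup.lift_apply_of, if_neg (fun h : s = j => hj (h ▸ hs))]
  have hβα : β.comp α = MonoidHom.id _ := by
    apply FreeGroup.ext_hom
    intro a
    simp only [MonoidHom.comp_apply, MonoidHom.id_apply]
    by_cases ha : a = j
    · subst ha
      rw [hα, FreeGroup.lift_apply_of, if_pos rfl, _root_.map_mul,
        hom_fix_of_mem_closure hg β hβS, hβ, FreeGroup.lift_apply_of,
        if_pos rfl, ← mul_assoc, mul_inv_cancel, one_mul]
    · rw [hα, FreeGroup.lift_apply_of, if_neg ha, hβ, FreeGroup.lift_apply_of, if_neg ha]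
  have hαβ : α.comp β = MonoidHom.id _ := by
    apply FreeGroup.ext_hom
    intro a
    simp only [MonoidHom.comp_apply, MonoidHom.id_apply]
    by_cases ha : a = j
    · subst ha
      rw [hβ, FreeGroup.lift_apply_of, if_pos rfl, _root_.map_mul, _root_.map_inv,
        hom_fix_of_mem_closure hg α hαS, hα, FreeGroup.lift_apply_of,
        if_pos rfl, ← mul_assoc, inv_mul_cancel, one_mul]
    · rw [hβ, FreeGroup.lift_apply_of, if_neg ha, hα, FreeGroup.lift_apply_of, if_neg ha]
  refine ⟨{ toFun := α, invFun := β,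
            left_inv := fun x => DFunLike.congr_fun hβα x,
            right_inv := fun x => DFunLike.congr_fun hαβ x,
            map_mul' := _root_.map_mul α }, ?_⟩
  show α (FreeGroup.of j) = _
  rw [hα, FreeGroup.lift_apply_of, if_pos rfl]

end Aux

/-- If `Fₙ = A * B`, with `A` generated by the standard generators `{xᵢ : i ∈ S}` and `B`
containing a basis element `b = x_j`, `j ∉ S`, and there is a sequence `g_m ∈ A` of reduced
words of length tending to infinity with `ρ'(g_m) → id`, then `ρ'` is not primitive-stable. -/
theorem not_primitiveStable_of_small_elements {n : ℕ} (hn : 2 ≤ n)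
    {H : Type*} [MetricSpace H] [Nonempty H]
    (ρ' : FreeGroup (Fin n) →* (H ≃ᵢ H))
    (S : Set (Fin n)) (j : Fin n) (hj : j ∉ S)
    (g : ℕ → FreeGroup (Fin n))
    (hgA : ∀ m, g m ∈ Subgroup.closure (FreeGroup.of '' S))
    (hlen : Tendsto (fun m => wl (g m)) atTop atTop)
    (hconv : ∀ x : H, Tendsto (fun m => dist ((ρ' (g m)) x) x) atTop (nhds 0)) :
    ¬ PrimitiveStable ρ' := by
  rintro ⟨K, δ, x, hK, hδ, hps⟩
  classical
  set b := FreeGroup.of j with hb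
  set y := (ρ' b) x with hy
  set C := dist x y with hC
  obtain ⟨m, hm1, hm2⟩ := ((hlen.eventually_ge_atTop (⌈K * (C + 1 + δ)⌉₊)).and
    ((hconv y).eventually (gt_mem_nhds (by norm_num : (0:ℝ) < 1)))).exists
  set w := g m * b with hw
  have hlet : ∀ z ∈ (g m).toWord, z.1 ∈ S := letters_mem_of_mem_closure (hgA m)
  have htw : w.toWord = (g m).toWord ++ [(j, true)] := by
    have hmk : w = FreeGroup.mk ((g m).toWord ++ [(j, true)]) := by
      rw [hw, ← FreeGroup.mul_mk, FreeGroup.mk_toWord]; rfl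
    rw [hmk, FreeGroup.toWord_mk]
    exact reduce_concat _ _ (FreeGroup.reduce_toWord _)
      (fun z hz (h : z.1 = j) => hj (h ▸ hlet z hz))
  have hprim : IsPrimitive w := by
    obtain ⟨φ, hφ⟩ := isPrimitive_mul_of hj (hgA m)
    exact ⟨φ, j, hφ⟩
  have hcyc : IsCyclicallyReduced w := by
    unfold IsCyclicallyReduced
    rw [htw]
    intro h
    rw [List.getLast_append_singleton]
    revert h
    cases hL : (g m).toWord with
    | nil => intro h; simp [invL]
    | cons z L' =>
      intro h
      have hzS : z.1 ∈ S := hlet z (hL ▸ List.mem_cons_self)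
      simp only [List.cons_append, List.head_cons, invL]
      intro hc
      apply hj
      have hzj := congrArg Prod.fst hc
      simp only at hzj
      exact hzj ▸ hzS
  have h1 : (1 : FreeGroup (Fin n)) ∈ axisVertices w :=
    ⟨0, 0, by rw [zpow_zero, List.take_zero, one_mul, ← FreeGroup.one_eq_mk]⟩
  have h2 : w ∈ axisVertices w :=
    ⟨1, 0, by rw [zpow_one, List.take_zero, ← FreeGroup.one_eq_mk, mul_one]⟩
  have hq := (hps w hprim hcyc 1 h1 w h2).1
  rw [inv_one, one_mul, _root_.map_one] at hq
  have hde : dist ((1 : H ≃ᵢ H) x) ((ρ' w) x) = dist x ((ρ' (g m)) y) := by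
    rw [hw, _root_.map_mul]; rfl
  rw [hde] at hq
  have hK0 : (0:ℝ) < K := lt_of_lt_of_le one_pos hK
  have hNle : K * (C + 1 + δ) ≤ (wl (g m) : ℝ) :=
    le_trans (Nat.le_ceil _) (Nat.cast_le.mpr hm1)
  have hwlw : (wl w : ℝ) = (wl (g m) : ℝ) + 1 := by
    unfold wl
    rw [htw, List.length_append, List.length_singleton]
    push_cast
    ring
  have hlow : C + 1 ≤ K⁻¹ * (wl w : ℝ) - δ := by
    have h3 : K⁻¹ * (K * (C+1+δ)) ≤ K⁻¹ * ((wl (g m) : ℝ) + 1) := by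
      apply mul_le_mul_of_nonneg_left (by linarith) (by positivity)
    rw [inv_mul_cancel_left₀ (ne_of_gt hK0)] at h3
    rw [hwlw]
    linarith
  have hub : dist x ((ρ' (g m)) y) < C + 1 := by
    calc dist x ((ρ' (g m)) y) ≤ dist x y + dist y ((ρ' (g m)) y) := dist_triangle _ _ _
    _ = C + dist ((ρ' (g m)) y) y := by rw [dist_comm y]
    _ < C + 1 := by linarith
  linarith
end

section
/- Let T be a simplicial tree, and let A_1, ..., A_k be lines (axes) in T such that the distance between any two A_i, A_j is at most D. Then there exists a point p ∈ T with d(p, A_i) ≤ D for all i simultaneously. -/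
/-- A geodesic metric space. -/
def IsGeodesicSpace (T : Type*) [MetricSpace T] : Prop :=
  ∀ x y : T, ∃ f : ℝ → T, f 0 = x ∧ f (dist x y) = y ∧
    ∀ s ∈ Set.Icc 0 (dist x y), ∀ t ∈ Set.Icc 0 (dist x y), dist (f s) (f t) = |s - t|

/-- The four-point condition with `δ = 0`. -/
def ZeroHyperbolic (T : Type*) [MetricSpace T] : Prop :=
  ∀ x y z w : T, dist x y + dist z w ≤ max (dist x z + dist y w) (dist x w + dist y z)

/-- A (simplicial or ℝ-)tree: a geodesic, 0-hyperbolic metric space. -/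
def IsRTree (T : Type*) [MetricSpace T] : Prop := IsGeodesicSpace T ∧ ZeroHyperbolic T

/-- The distance between two subsets. -/
noncomputable def setDist {T : Type*} [MetricSpace T] (A B : Set T) : ℝ :=
  sInf {d | ∃ a ∈ A, ∃ b ∈ B, d = dist a b}

section Aux
variable {T : Type*} [MetricSpace T]

/-- helper: lower bound on infDist -/
lemma le_infDist_of_forall {s : Set T} (hs : s.Nonempty) {x : T} {b : ℝ}
    (h : ∀ y ∈ s, b ≤ dist x y) : b ≤ Metric.infDist x s := by
  by_contra hlt
  obtain ⟨y, hy, hd⟩ := (Metric.infDist_lt_iff hs).1 (lt_of_not_ge hlt)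
  exact absurd (h y hy) (not_le.2 hd)

/-- uniqueness of intermediate points on geodesics, from 0-hyperbolicity -/
lemma unique_pt (h4 : ZeroHyperbolic T) {a b z m : T}
    (hz : dist a z + dist z b = dist a b) (hm : dist a m + dist m b = dist a b)
    (hzm : dist a z = dist a m) : z = m := by
  have h := h4 z m a b
  have e1 : dist z a = dist a z := dist_comm _ _
  have e2 : dist m a = dist a m := dist_comm _ _
  have : dist z m ≤ 0 := by
    rcases max_cases (dist z a + dist m b) (dist z b + dist m a) with ⟨he, _⟩ | ⟨he, _⟩ <;>
      rw [he] at h <;> linarith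
  exact dist_le_zero.1 this

/-- medians exist in an R-tree -/
lemma exists_median (hT : IsRTree T) (x y z : T) :
    ∃ m : T, dist x m + dist m y = dist x y ∧ dist x m + dist m z = dist x z ∧
      dist y m + dist m z = dist y z ∧ dist x m = (dist x y + dist x z - dist y z) / 2 := by
  obtain ⟨f, hf0, hfd, hiso⟩ := hT.1 x y
  set α := (dist x y + dist x z - dist y z) / 2 with hα
  have t1 : dist y z ≤ dist y x + dist x z := dist_triangle y x z
  have t2 : dist x z ≤ dist x y + dist y z := dist_triangle x y z
  have hyx : dist y x = dist x y := dist_comm _ _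
  have hα0 : 0 ≤ α := by rw [hα]; linarith
  have hα1 : α ≤ dist x y := by rw [hα]; linarith
  have h0mem : (0:ℝ) ∈ Set.Icc 0 (dist x y) := ⟨le_rfl, dist_nonneg⟩
  have hdmem : dist x y ∈ Set.Icc 0 (dist x y) := ⟨dist_nonneg, le_rfl⟩
  have hαmem : α ∈ Set.Icc 0 (dist x y) := ⟨hα0, hα1⟩
  have hxm : dist x (f α) = α := by
    have := hiso 0 h0mem α hαmem
    rw [hf0] at this; rw [this]; rw [abs_of_nonpos (by linarith)]; ring
  have hmy : dist (f α) y = dist x y - α := by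
    have := hiso α hαmem (dist x y) hdmem
    rw [hfd] at this; rw [this, abs_of_nonpos (by linarith)]; ring
  have hub : dist (f α) z ≤ dist x z - α := by
    have h := hT.2 (f α) z x y
    have e1 : dist (f α) x = α := by rw [dist_comm]; exact hxm
    have e2 : dist (f α) y = dist x y - α := hmy
    have e3 : dist z y = dist y z := dist_comm _ _
    have e4 : dist z x = dist x z := dist_comm _ _
    rcases max_cases (dist (f α) x + dist z y) (dist (f α) y + dist z x) with ⟨he, _⟩ | ⟨he, _⟩ <;>
      rw [he] at h <;> rw [hα] at * <;> linarith
  have hlb : dist x z ≤ dist x (f α) + dist (f α) z := dist_triangle _ _ _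
  have hlb2 : dist y z ≤ dist y (f α) + dist (f α) z := dist_triangle _ _ _
  have hym : dist y (f α) = dist x y - α := by rw [dist_comm]; exact hmy
  refine ⟨f α, by rw [hxm, hmy]; ring, ?_, ?_, hxm⟩
  · have : dist (f α) z = dist x z - α := le_antisymm hub (by linarith [hxm])
    rw [hxm, this]; ring
  · have h1 : dist (f α) z = dist x z - α := le_antisymm hub (by linarith [hxm])
    rw [hym, h1, hα]; ring



variable {T : Type*} [MetricSpace T]

def IsLine (f : ℝ → T) : Prop := ∀ s t : ℝ, dist (f s) (f t) = |s - t|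

/-- the nearest-point parameter on a line exists -/
lemma exists_min_param {f : ℝ → T} (hf : IsLine f) (x : T) :
    ∃ u : ℝ, ∀ s : ℝ, dist x (f u) ≤ dist x (f s) := by
  set φ : ℝ → ℝ := fun s => dist x (f s) with hφ
  have hlip : LipschitzWith 1 φ := by
    apply LipschitzWith.of_dist_le_mul
    intro s t
    rw [Real.dist_eq]
    have : (1:NNReal) * dist s t = dist s t := by simp
    rw [this]
    calc |φ s - φ t| ≤ dist (f s) (f t) := by
          simp only [hφ, dist_comm x]; exact abs_dist_sub_le _ _ _
    _ = |s - t| := hf s t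
    _ = dist s t := (Real.dist_eq s t).symm
  set r := dist x (f 0) with hr
  have hr0 : 0 ≤ r := dist_nonneg
  have hK : IsCompact (Set.Icc (-(2*r+1)) (2*r+1)) := isCompact_Icc
  have h0mem : (0:ℝ) ∈ Set.Icc (-(2*r+1)) (2*r+1) := by
    constructor <;> [linarith; linarith]
  obtain ⟨u, hu, humin⟩ := hK.exists_isMinOn ⟨0, h0mem⟩ hlip.continuous.continuousOn
  refine ⟨u, fun s => ?_⟩
  by_cases hs : s ∈ Set.Icc (-(2*r+1)) (2*r+1)
  · exact humin hs
  · have habs : 2*r+1 < |s| := by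
      rcases abs_cases s with ⟨he, _⟩ | ⟨he, _⟩ <;> rw [he] <;>
        simp only [Set.mem_Icc, not_and_or, not_le] at hs <;> rcases hs with h | h <;> linarith
    have h1 : |s| - r ≤ φ s := by
      have := dist_triangle (f 0) x (f s)
      have h2 : dist (f 0) (f s) = |s| := by rw [hf 0 s]; simp
      have h3 : dist (f 0) x = r := dist_comm x (f 0) ▸ rfl
      simp only [hφ]; rw [h2, h3] at this; linarith [this]
    calc dist x (f u) ≤ φ 0 := humin h0mem
    _ = r := rfl
    _ ≤ |s| - r := by linarith
    _ ≤ φ s := h1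


/-- Gate property: the nearest point on a line is a gate. -/
lemma exists_gate (hT : IsRTree T) {f : ℝ → T} (hf : IsLine f) (x : T) :
    ∃ u : ℝ, ∀ s : ℝ, dist x (f s) = dist x (f u) + dist (f u) (f s) := by
  obtain ⟨u, humin⟩ := exists_min_param hf x
  refine ⟨u, fun s => ?_⟩
  obtain ⟨m, hm1, hm2, hm3, _⟩ := exists_median hT x (f u) (f s)
  have hdus : dist (f u) (f s) = |s - u| := by rw [hf u s, abs_sub_comm]
  have hc0 : 0 ≤ dist (f u) m := dist_nonneg
  have hcle : dist (f u) m ≤ |s - u| := by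
    have h1 : 0 ≤ dist m (f s) := dist_nonneg
    linarith [hm3, hdus.symm.le, hdus.symm.ge]
  set c := dist (f u) m with hc
  set v : ℝ := if u ≤ s then u + c else u - c with hv
  have hfv1 : dist (f u) (f v) = c := by
    rw [hf u v, hv]
    split_ifs
    · rw [show u - (u + c) = -c by ring, abs_neg, abs_of_nonneg hc0]
    · rw [show u - (u - c) = c by ring, abs_of_nonneg hc0]
  have hfv2 : dist (f v) (f s) = |s - u| - c := by
    rw [hf v s, hv]
    split_ifs with h
    · have h1 : c ≤ s - u := by rw [abs_of_nonneg (by linarith)] at hcle; linarith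
      rw [abs_of_nonpos (by linarith : u + c - s ≤ 0), abs_of_nonneg (by linarith : (0:ℝ) ≤ s - u)]
      ring
    · have h1 : c ≤ u - s := by rw [abs_of_nonpos (by linarith)] at hcle; linarith
      rw [abs_of_nonneg (by linarith : (0:ℝ) ≤ u - c - s), abs_of_nonpos (by linarith : s - u ≤ 0)]
      ring
  have hmeq : m = f v := by
    refine unique_pt hT.2 (a := f u) (b := f s) hm3 ?_ ?_
    · rw [hfv1, hfv2, hdus]; ring
    · rw [hfv1]
  have hd0 : dist m (f u) ≤ 0 := by
    have h1 := humin v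
    rw [← hmeq] at h1
    linarith [hm1]
  have : m = f u := eq_of_dist_eq_zero (le_antisymm hd0 dist_nonneg)
  rw [this] at hm2
  linarith [hm2]


/-- Dichotomy: two lines either intersect, or there is a common bridge giving an exact
distance formula. -/
lemma line_dichotomy (hT : IsRTree T) {f g : ℝ → T} (hf : IsLine f) (hg : IsLine g) :
    (∃ w s, f w = g s) ∨
    (∃ c s₀ : ℝ, ∀ t s : ℝ, dist (f t) (g s) = dist (f c) (g s₀) + |t - c| + |s - s₀|) := by
  by_cases hint : ∃ w s, f w = g s
  · exact Or.inl hint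
  right
  push_neg at hint
  choose σ hσ using fun t => exists_gate hT hg (f t)
  have hconst : ∀ t t', g (σ t) = g (σ t') := by
    intro t t'
    by_contra hne
    have hGG' : dist (f t) (g (σ t')) = dist (f t) (g (σ t)) + dist (g (σ t)) (g (σ t')) :=
      hσ t (σ t')
    have hG'G : dist (f t') (g (σ t)) = dist (f t') (g (σ t')) + dist (g (σ t')) (g (σ t)) :=
      hσ t' (σ t)
    have h4 := hT.2 (f t) (g (σ t')) (f t') (g (σ t))
    have hGpos : 0 < dist (g (σ t)) (g (σ t')) := dist_pos.2 hne
    have htri : dist (f t) (f t') ≤ dist (f t) (g (σ t)) + dist (g (σ t)) (f t') :=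
      dist_triangle _ _ _
    have htri2 : dist (g (σ t)) (f t') ≤ dist (g (σ t)) (g (σ t')) + dist (g (σ t')) (f t') :=
      dist_triangle _ _ _
    have hcomm1 : dist (g (σ t')) (g (σ t)) = dist (g (σ t)) (g (σ t')) := dist_comm _ _
    have hcomm2 : dist (g (σ t')) (f t') = dist (f t') (g (σ t')) := dist_comm _ _
    have hcomm3 : dist (g (σ t)) (f t') = dist (f t') (g (σ t)) := dist_comm _ _
    have hkey : dist (f t) (f t') =
        dist (f t) (g (σ t)) + dist (g (σ t)) (g (σ t')) + dist (g (σ t')) (f t') := by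
      rcases max_cases (dist (f t) (f t') + dist (g (σ t')) (g (σ t)))
        (dist (f t) (g (σ t)) + dist (g (σ t')) (f t')) with ⟨he, _⟩ | ⟨he, _⟩ <;>
        rw [he] at h4 <;> linarith
    have hGft' : dist (g (σ t)) (f t') = dist (g (σ t)) (g (σ t')) + dist (g (σ t')) (f t') := by
      linarith
    set d := dist (f t) (g (σ t)) with hd
    have hd0 : 0 ≤ d := dist_nonneg
    have hdle : d ≤ dist (f t) (f t') := by
      have := dist_nonneg (x := g (σ t)) (y := g (σ t'))
      have := dist_nonneg (x := g (σ t')) (y := f t')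
      linarith
    have hdtt' : dist (f t) (f t') = |t' - t| := by rw [hf t t', abs_sub_comm]
    set w : ℝ := if t ≤ t' then t + d else t - d with hw
    have hfw1 : dist (f t) (f w) = d := by
      rw [hf t w, hw]
      split_ifs
      · rw [show t - (t + d) = -d by ring, abs_neg, abs_of_nonneg hd0]
      · rw [show t - (t - d) = d by ring, abs_of_nonneg hd0]
    have hfw2 : dist (f w) (f t') = dist (f t) (f t') - d := by
      rw [hf w t', hw, hdtt']
      split_ifs with h
      · have h1 : d ≤ t' - t := by rw [abs_of_nonneg (by linarith)] at hdtt'; linarith [hdle]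
        rw [abs_of_nonpos (by linarith : t + d - t' ≤ 0), abs_of_nonneg (by linarith : (0:ℝ) ≤ t' - t)]
        ring
      · have h1 : d ≤ t - t' := by rw [abs_of_nonpos (by linarith)] at hdtt'; linarith [hdle]
        rw [abs_of_nonneg (by linarith : (0:ℝ) ≤ t - d - t'), abs_of_nonpos (by linarith : t' - t ≤ 0)]
        ring
    have : g (σ t) = f w := by
      refine unique_pt hT.2 (a := f t) (b := f t') ?_ ?_ ?_
      · rw [hGft']; linarith
      · rw [hfw1, hfw2]; ring
      · rw [hfw1]
    exact hint w (σ t) this.symm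
  obtain ⟨c, hcgate⟩ := exists_gate hT hf (g (σ 0))
  refine ⟨c, σ 0, fun t s => ?_⟩
  have h1 := hσ t s
  rw [hconst t 0] at h1
  have h2 := hcgate t
  have e1 : dist (f t) (g (σ 0)) = dist (g (σ 0)) (f t) := dist_comm _ _
  have e2 : dist (g (σ 0)) (f c) = dist (f c) (g (σ 0)) := dist_comm _ _
  have e3 : dist (f c) (f t) = |t - c| := by rw [hf c t, abs_sub_comm]
  have e4 : dist (g (σ 0)) (g s) = |s - σ 0| := by rw [hg (σ 0) s, abs_sub_comm]
  rw [h1, e4, e1, h2, e2, e3]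


/-- A point metrically between two points of a line lies on the line. -/
lemma mem_range_of_between (hT : IsRTree T) {g : ℝ → T} (hg : IsLine g) {p q : ℝ} {z : T}
    (h1 : dist (g p) z + dist z (g q) = dist (g p) (g q)) : ∃ r, z = g r := by
  set e := dist (g p) z with he
  have hpq : dist (g p) (g q) = |q - p| := by rw [hg p q, abs_sub_comm]
  have he0 : 0 ≤ e := dist_nonneg
  have hele : e ≤ |q - p| := by
    have := dist_nonneg (x := z) (y := g q); rw [hpq] at h1; linarith
  set r : ℝ := if p ≤ q then p + e else p - e with hr
  have hr1 : dist (g p) (g r) = e := by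
    rw [hg p r, hr]
    split_ifs
    · rw [show p - (p + e) = -e by ring, abs_neg, abs_of_nonneg he0]
    · rw [show p - (p - e) = e by ring, abs_of_nonneg he0]
  have hr2 : dist (g r) (g q) = |q - p| - e := by
    rw [hg r q, hr]
    split_ifs with hc
    · have h2 : e ≤ q - p := by rw [abs_of_nonneg (by linarith)] at hele; linarith
      rw [abs_of_nonpos (by linarith : p + e - q ≤ 0), abs_of_nonneg (by linarith : (0:ℝ) ≤ q - p)]
      ring
    · have h2 : e ≤ p - q := by rw [abs_of_nonpos (by linarith)] at hele; linarith
      rw [abs_of_nonneg (by linarith : (0:ℝ) ≤ p - e - q), abs_of_nonpos (by linarith : q - p ≤ 0)]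
      ring
  refine ⟨r, unique_pt hT.2 (a := g p) (b := g q) h1 ?_ ?_⟩
  · rw [hr1, hr2, hpq]; ring
  · rw [hr1]


/-- Structure of a line `g` relative to a base line `f`: a "shadow" interval `K` on the base
line and a height `h`. -/
lemma structure_lemma (hT : IsRTree T) {f g : ℝ → T} (hf : IsLine f) (hg : IsLine g) :
    ∃ (K : Set ℝ) (h : ℝ), K.Nonempty ∧ K.OrdConnected ∧ 0 ≤ h ∧
      (∀ u ∈ K, ∃ b ∈ Set.range g, ∀ t : ℝ, dist (f t) b ≤ h + |t - u|) ∧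
      (∀ b ∈ Set.range g, ∃ u ∈ K,
        (∀ t : ℝ, dist b (f t) = dist b (f u) + |t - u|) ∧ h ≤ dist b (f u)) := by
  rcases line_dichotomy hT hf hg with ⟨w, p, hwp⟩ | ⟨c, s₀, hform⟩
  · -- intersecting case
    refine ⟨{t | ∃ r, f t = g r}, 0, ⟨w, p, hwp⟩, ?_, le_rfl, ?_, ?_⟩
    · -- OrdConnected
      refine ⟨fun t₁ h₁ t₂ h₂ u hu => ?_⟩
      obtain ⟨p₁, hp₁⟩ := h₁
      obtain ⟨p₂, hp₂⟩ := h₂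
      obtain ⟨hu1, hu2⟩ := hu
      refine mem_range_of_between hT hg (p := p₁) (q := p₂) ?_
      rw [← hp₁, ← hp₂, hf t₁ u, hf u t₂, hf t₁ t₂,
        abs_of_nonpos (by linarith : t₁ - u ≤ 0), abs_of_nonpos (by linarith : u - t₂ ≤ 0),
        abs_of_nonpos (by linarith : t₁ - t₂ ≤ 0)]
      ring
    · -- P3
      rintro u ⟨r, hur⟩
      refine ⟨g r, ⟨r, rfl⟩, fun t => ?_⟩
      rw [← hur, hf t u, zero_add]
    · -- P6
      rintro b ⟨q, rfl⟩
      obtain ⟨u, hu⟩ := exists_gate hT hf (g q)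
      have humem : ∃ r, f u = g r := by
        have h1 : dist (g q) (f u) + dist (f u) (g p) = dist (g q) (g p) := by
          rw [← hwp]
          have := hu w
          rw [this, hf u w]
        obtain ⟨r, hr⟩ := mem_range_of_between hT hg (p := q) (q := p) h1
        exact ⟨r, hr⟩
      refine ⟨u, humem, fun t => ?_, dist_nonneg⟩
      rw [hu t, hf u t, abs_sub_comm]
  · -- disjoint case: bridge formula
    refine ⟨{c}, dist (f c) (g s₀), ⟨c, rfl⟩, Set.ordConnected_singleton, dist_nonneg, ?_, ?_⟩
    · rintro u rfl
      refine ⟨g s₀, ⟨s₀, rfl⟩, fun t => ?_⟩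
      rw [hform t s₀]
      simp
    · rintro b ⟨q, rfl⟩
      refine ⟨c, rfl, fun t => ?_, ?_⟩
      · have h1 := hform t q
        have h2 := hform c q
        rw [dist_comm (g q) (f t), dist_comm (g q) (f c), h1, h2]
        simp only [sub_self, abs_zero, add_zero]
        ring
      · have h2 := hform c q
        rw [dist_comm (g q) (f c), h2]
        simp only [sub_self, abs_zero, add_zero]
        have := abs_nonneg (q - s₀)
        linarith


/-- The distance between two lines is attained (up to `D`). -/
lemma attained_pair (hT : IsRTree T) {f g : ℝ → T} (hf : IsLine f) (hg : IsLine g) {D : ℝ}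
    (hD0 : 0 ≤ D) (hsd : setDist (Set.range f) (Set.range g) ≤ D) :
    ∃ a ∈ Set.range f, ∃ b ∈ Set.range g, dist a b ≤ D := by
  rcases line_dichotomy hT hf hg with ⟨w, p, hwp⟩ | ⟨c, s₀, hform⟩
  · exact ⟨f w, ⟨w, rfl⟩, g p, ⟨p, rfl⟩, by rw [hwp, dist_self]; exact hD0⟩
  · refine ⟨f c, ⟨c, rfl⟩, g s₀, ⟨s₀, rfl⟩, ?_⟩
    have hlb : dist (f c) (g s₀) ≤ setDist (Set.range f) (Set.range g) := by
      refine le_csInf ⟨dist (f c) (g s₀), ⟨f c, ⟨c, rfl⟩, g s₀, ⟨s₀, rfl⟩, rfl⟩⟩ ?_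
      rintro d ⟨a, ⟨t, rfl⟩, b, ⟨s, rfl⟩, rfl⟩
      rw [hform t s]
      have h1 := abs_nonneg (t - c); have h2 := abs_nonneg (s - s₀); linarith
    linarith

end Aux

section RealLemmas

lemma ordConnected_sublevel {K : Set ℝ} (hK : K.Nonempty) (hord : K.OrdConnected) {r : ℝ}
    (hr : 0 ≤ r) : Set.OrdConnected {t : ℝ | Metric.infDist t K ≤ r} := by
  refine ⟨fun t₁ h₁ t₂ h₂ u hu => ?_⟩
  obtain ⟨hu1, hu2⟩ := hu
  simp only [Set.mem_setOf_eq] at h₁ h₂ ⊢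
  refine le_of_forall_pos_le_add fun ε hε => ?_
  have hlt1 : Metric.infDist t₁ K < r + ε := by linarith
  have hlt2 : Metric.infDist t₂ K < r + ε := by linarith
  obtain ⟨a, haK, ha⟩ := (Metric.infDist_lt_iff hK).1 hlt1
  obtain ⟨a', ha'K, ha'⟩ := (Metric.infDist_lt_iff hK).1 hlt2
  rw [Real.dist_eq] at ha ha'
  rcases le_or_gt u a with h | h
  · have : Metric.infDist u K ≤ dist u a := Metric.infDist_le_dist_of_mem haK
    rw [Real.dist_eq] at this
    have h3 : |u - a| ≤ |t₁ - a| := by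
      rw [abs_of_nonpos (by linarith), abs_of_nonpos (by linarith)]; linarith
    linarith
  rcases le_or_gt a' u with h' | h'
  · have : Metric.infDist u K ≤ dist u a' := Metric.infDist_le_dist_of_mem ha'K
    rw [Real.dist_eq] at this
    have h3 : |u - a'| ≤ |t₂ - a'| := by
      rw [abs_of_nonneg (by linarith), abs_of_nonneg (by linarith)]; linarith
    linarith
  · have huK : u ∈ K := hord.out haK ha'K ⟨le_of_lt h, le_of_lt h'⟩
    rw [Metric.infDist_zero_of_mem huK]
    linarith

lemma helly_R {k : ℕ} (hk : 0 < k) (S : Fin k → Set ℝ) (hord : ∀ i, (S i).OrdConnected)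
    (hpair : ∀ i j, (S i ∩ S j).Nonempty) : ∃ t, ∀ i, t ∈ S i := by
  haveI : Nonempty (Fin k) := ⟨⟨0, hk⟩⟩
  choose x hx using hpair
  set m : Fin k → ℝ := fun i => Finset.univ.inf' Finset.univ_nonempty (x i) with hm
  set t := Finset.univ.sup' Finset.univ_nonempty m with ht
  refine ⟨t, fun j => ?_⟩
  obtain ⟨i₀, _, hi₀⟩ := Finset.exists_mem_eq_sup' (Finset.univ_nonempty) m
  obtain ⟨j', _, hj'⟩ := Finset.exists_mem_eq_inf' (Finset.univ_nonempty) (x j)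
  have ha : x j j' ∈ S j := (hx j j').1
  have hb : x i₀ j ∈ S j := (hx i₀ j).2
  have hat : x j j' ≤ t := by
    rw [ht, ← hj']
    exact Finset.le_sup' m (Finset.mem_univ j)
  have htb : t ≤ x i₀ j := by
    rw [ht, hi₀, hm]
    exact Finset.inf'_le _ (Finset.mem_univ j)
  exact (hord j).out ha hb ⟨hat, htb⟩

end RealLemmas


/-- If `A₁, …, A_k` are lines (isometrically embedded copies of ℝ) in a tree with pairwise
distances at most `D`, then some point `p` is within distance `D` of all of them
simultaneously. -/
theorem common_center_for_axes {T : Type*} [MetricSpace T] [Nonempty T]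
    (hT : IsRTree T) (k : ℕ) (A : Fin k → Set T)
    (hline : ∀ i, ∃ f : ℝ → T, (∀ s t : ℝ, dist (f s) (f t) = |s - t|) ∧ Set.range f = A i)
    (D : ℝ) (hD : ∀ i j, setDist (A i) (A j) ≤ D) :
    ∃ p : T, ∀ i, Metric.infDist p (A i) ≤ D := by

  rcases Nat.eq_zero_or_pos k with rfl | hk
  · exact ⟨Classical.arbitrary T, fun i => i.elim0⟩
  choose g hgline hgrange using hline
  set i₀ : Fin k := ⟨0, hk⟩ with hi₀
  have hD0 : 0 ≤ D := by
    have h1 : 0 ≤ setDist (A i₀) (A i₀) := by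
      apply Real.sInf_nonneg
      rintro d ⟨a, _, b, _, rfl⟩
      exact dist_nonneg
    linarith [hD i₀ i₀]
  set f := g i₀ with hfdef
  have hf : IsLine f := hgline i₀
  choose K h hKne hKord hh0 hP3 hP6 using fun i => structure_lemma hT hf (hgline i)
  have hhD : ∀ i, h i ≤ D := by
    intro i
    have hle : h i ≤ setDist (A i₀) (A i) := by
      apply le_csInf
      · refine ⟨dist (f 0) (g i 0), f 0, ?_, g i 0, ?_, rfl⟩
        · rw [← hgrange i₀]; exact ⟨0, rfl⟩
        · rw [← hgrange i]; exact ⟨0, rfl⟩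
      rintro d ⟨a, ha, b, hb, rfl⟩
      rw [← hgrange i₀] at ha; rw [← hgrange i] at hb
      obtain ⟨t, rfl⟩ := ha; obtain ⟨s, rfl⟩ := hb
      obtain ⟨u, huK, hiden, hge⟩ := hP6 i (g i s) ⟨s, rfl⟩
      have h1 := hiden t
      have h2 := abs_nonneg (t - u)
      have h3 : dist (g i₀ t) (g i s) = dist (g i s) (f t) := dist_comm _ _
      rw [h3, h1]
      linarith
    linarith [hD i₀ i]
  set S : Fin k → Set ℝ := fun i => {t | Metric.infDist t (K i) ≤ D - h i} with hS
  have hSord : ∀ i, (S i).OrdConnected := fun i =>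
    ordConnected_sublevel (hKne i) (hKord i) (by linarith [hhD i])
  have hSpair : ∀ i j, (S i ∩ S j).Nonempty := by
    intro i j
    have hsd : setDist (Set.range (g i)) (Set.range (g j)) ≤ D := by
      rw [hgrange i, hgrange j]; exact hD i j
    obtain ⟨a, ha, b, hb, hab⟩ := attained_pair hT (hgline i) (hgline j) hD0 hsd
    obtain ⟨u, huK, huid, hua⟩ := hP6 i a ha
    obtain ⟨v, hvK, hvid, hvb⟩ := hP6 j b hb
    have hvSj : v ∈ S j := by
      simp only [hS, Set.mem_setOf_eq, Metric.infDist_zero_of_mem hvK]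
      linarith [hhD j]
    have e1 : dist a (f v) = dist a (f u) + |v - u| := huid v
    have e2 : dist b (f u) = dist b (f v) + |u - v| := hvid u
    have h4 := hT.2 a (f v) b (f u)
    have hcomm : dist (f v) b = dist b (f v) := dist_comm _ _
    have hcomm2 : dist (f v) (f u) = |u - v| := by rw [hf v u, abs_sub_comm]
    have habs : |v - u| = |u - v| := abs_sub_comm _ _
    have hkey : |u - v| ≤ D - h i - h j ∨ u = v := by
      rcases max_cases (dist a b + dist (f v) (f u)) (dist a (f u) + dist (f v) b)
        with ⟨he, _⟩ | ⟨he, _⟩ <;> rw [he] at h4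
      · left
        rw [hcomm2] at h4
        have := hua; have := hvb
        linarith [e1, e2, habs, hab]
      · right
        rw [hcomm] at h4
        have h5 : |u - v| ≤ 0 := by linarith [e1, e2, habs]
        have := abs_nonneg (u - v)
        have : |u - v| = 0 := le_antisymm h5 (abs_nonneg _)
        have := abs_eq_zero.1 this
        linarith [sub_eq_zero.1 this]
    have hvSi : v ∈ S i := by
      simp only [hS, Set.mem_setOf_eq]
      rcases hkey with hle | rfl
      · have : Metric.infDist v (K i) ≤ dist v u := Metric.infDist_le_dist_of_mem huK
        rw [Real.dist_eq] at this
        have habs2 : |v - u| = |u - v| := abs_sub_comm _ _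
        linarith [hh0 j]
      · rw [Metric.infDist_zero_of_mem huK]
        linarith [hhD i]
    exact ⟨v, hvSi, hvSj⟩
  obtain ⟨t0, ht0⟩ := helly_R hk S hSord hSpair
  refine ⟨f t0, fun i => ?_⟩
  rw [← hgrange i]
  refine le_of_forall_pos_le_add fun ε hε => ?_
  have h1 : Metric.infDist t0 (K i) < (D - h i) + ε := lt_of_le_of_lt (ht0 i) (by linarith)
  obtain ⟨u, huK, hud⟩ := (Metric.infDist_lt_iff (hKne i)).1 h1
  rw [Real.dist_eq] at hud
  obtain ⟨b, hbmem, hble⟩ := hP3 i u huK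
  calc Metric.infDist (f t0) (Set.range (g i)) ≤ dist (f t0) b :=
        Metric.infDist_le_dist_of_mem hbmem
  _ ≤ h i + |t0 - u| := hble t0
  _ ≤ h i + ((D - h i) + ε) := by linarith
  _ = D + ε := by ring
end
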